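/- Let N ≥ 2 and let K be the normal subgroup of G̃_N generated by the elements u₁², u₂² and U²u₂⁻²u₁⁻². If N is even, then G̃_N/K is isomorphic to the semidirect product (ℤ/2)² ⋊ SL₂(ℤ/4); if N is odd, then G̃_N/K is isomorphic to the semidirect product (ℤ/2)² ⋊ PSL₂(ℤ/4). In both cases the action on (ℤ/2)² is given by reducing matrices modulo 2 and letting SL₂(ℤ/2) act on column vectors by matrix multiplication (for PSL₂(ℤ/4) this is well defined since the center reduces to the identity modulo 2). -/

import Mathlib

/-- Relators of the modular `N`-state chiral Potts group `G̃_N`: generators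
`0 ↦ u₁`, `1 ↦ u₂`, `2 ↦ U`, `3 ↦ S`, `4 ↦ T`. -/
def mcpRels (N : ℕ) : Set (FreeGroup (Fin 5)) :=
  { FreeGroup.of 0 * FreeGroup.of 1 * (FreeGroup.of 0)⁻¹ *
      ((FreeGroup.of 2) ^ 2 * ((FreeGroup.of 1)⁻¹) ^ 3)⁻¹,
    FreeGroup.of 0 * FreeGroup.of 2 * (FreeGroup.of 0)⁻¹ *
      ((FreeGroup.of 2)⁻¹ * (FreeGroup.of 0) ^ 2)⁻¹,
    FreeGroup.of 1 * FreeGroup.of 2 * (FreeGroup.of 1)⁻¹ *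
      ((FreeGroup.of 2)⁻¹ * (FreeGroup.of 1) ^ 2)⁻¹,
    (FreeGroup.of 0) ^ (2 * N), (FreeGroup.of 1) ^ (2 * N), (FreeGroup.of 2) ^ N,
    FreeGroup.of 3 * FreeGroup.of 0 * (FreeGroup.of 3)⁻¹ * (FreeGroup.of 1)⁻¹,
    FreeGroup.of 3 * FreeGroup.of 1 * (FreeGroup.of 3)⁻¹ *
      ((FreeGroup.of 2)⁻¹ * FreeGroup.of 0 * FreeGroup.of 2)⁻¹,
    FreeGroup.of 3 * FreeGroup.of 2 * (FreeGroup.of 3)⁻¹ * (FreeGroup.of 2)⁻¹,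
    FreeGroup.of 4 * FreeGroup.of 0 * (FreeGroup.of 4)⁻¹ *
      (FreeGroup.of 0 * (FreeGroup.of 1)⁻¹)⁻¹,
    FreeGroup.of 4 * FreeGroup.of 1 * (FreeGroup.of 4)⁻¹ * (FreeGroup.of 1)⁻¹,
    FreeGroup.of 4 * FreeGroup.of 2 * (FreeGroup.of 4)⁻¹ * (FreeGroup.of 2)⁻¹,
    (FreeGroup.of 3) ^ 2 * FreeGroup.of 2,
    (FreeGroup.of 3 * FreeGroup.of 4) ^ 3 * FreeGroup.of 2,
    (FreeGroup.of 4) ^ 4 * ((FreeGroup.of 1) ^ 2)⁻¹ }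

/-- The modular `N`-state chiral Potts group `G̃_N`. -/
abbrev MCP (N : ℕ) := PresentedGroup (mcpRels N)

def mu₁ (N : ℕ) : MCP N := PresentedGroup.of 0
def mu₂ (N : ℕ) : MCP N := PresentedGroup.of 1
def mU (N : ℕ) : MCP N := PresentedGroup.of 2

/-- The normal subgroup `K` of `G̃_N` generated by `u₁²`, `u₂²`, `U²u₂⁻²u₁⁻²`. -/
def Ksub (N : ℕ) : Subgroup (MCP N) :=
  Subgroup.normalClosure {mu₁ N ^ 2, mu₂ N ^ 2, mU N ^ 2 * (mu₂ N ^ 2)⁻¹ * (mu₁ N ^ 2)⁻¹}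

instance (N : ℕ) : (Ksub N).Normal := Subgroup.normalClosure_normal

/-- Column vectors `(ℤ/2)²`. -/
abbrev V2 := Fin 2 → ZMod 2

/-- `SL₂(ℤ/4)`. -/
abbrev SL2Z4 := Matrix.SpecialLinearGroup (Fin 2) (ZMod 4)

/-- `PSL₂(ℤ/4)`: the quotient of `SL₂(ℤ/4)` by its center. -/
abbrev PSL2Z4 := SL2Z4 ⧸ Subgroup.center SL2Z4

/-- Linear automorphisms of `(ℤ/2)²` as multiplicative automorphisms of the
corresponding multiplicative group. -/
def linToMulAut : (V2 ≃ₗ[ZMod 2] V2) →* MulAut (Multiplicative V2) where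
  toFun e := AddEquiv.toMultiplicative e.toAddEquiv
  map_one' := by ext x; rfl
  map_mul' e₁ e₂ := by ext x; rfl

/-- The action of `SL₂(ℤ/4)` on `(ℤ/2)²` given by reducing matrices modulo 2 and letting
`SL₂(ℤ/2)` act on column vectors by matrix multiplication. -/
def actSL : SL2Z4 →* MulAut (Multiplicative V2) :=
  linToMulAut.comp ((Matrix.SpecialLinearGroup.toLin').comp
    (Matrix.SpecialLinearGroup.map (ZMod.castHom (show (2:ℕ) ∣ 4 by norm_num) (ZMod 2))))


namespace MCPaux


noncomputable def presentedQuotEquiv {α : Type*} (rels extra : Set (FreeGroup α)) :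
    (PresentedGroup rels ⧸ Subgroup.normalClosure ((PresentedGroup.mk rels) '' extra)) ≃*
      PresentedGroup (rels ∪ extra) := by
  have hle : Subgroup.normalClosure rels ≤ Subgroup.normalClosure (rels ∪ extra) :=
    Subgroup.normalClosure_mono Set.subset_union_left
  have hmap : (Subgroup.normalClosure (rels ∪ extra)).map
      (QuotientGroup.mk' (Subgroup.normalClosure rels)) =
      Subgroup.normalClosure ((PresentedGroup.mk rels) '' extra) := by
    rw [Subgroup.map_normalClosure _ _ (QuotientGroup.mk'_surjective _)]
    apply le_antisymm
    · apply Subgroup.normalClosure_le_normal (N := Subgroup.normalClosure ((PresentedGroup.mk rels) '' extra))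
      rintro _ ⟨x, hx, rfl⟩
      rcases hx with hx | hx
      · have : (QuotientGroup.mk' (Subgroup.normalClosure rels)) x = 1 := by
          rw [QuotientGroup.mk'_apply, QuotientGroup.eq_one_iff]
          exact Subgroup.subset_normalClosure hx
        rw [this]
        exact one_mem _
      · exact Subgroup.subset_normalClosure ⟨x, hx, rfl⟩
    · apply Subgroup.normalClosure_le_normal (N := Subgroup.normalClosure ((QuotientGroup.mk' (Subgroup.normalClosure rels)) '' (rels ∪ extra)))
      rintro _ ⟨x, hx, rfl⟩
      exact Subgroup.subset_normalClosure ⟨x, Or.inr hx, rfl⟩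
  haveI : ((Subgroup.normalClosure (rels ∪ extra)).map
      (QuotientGroup.mk' (Subgroup.normalClosure rels))).Normal :=
    Subgroup.Normal.map inferInstance _ (QuotientGroup.mk'_surjective _)
  haveI : @Subgroup.Normal (PresentedGroup rels) _ ((Subgroup.normalClosure (rels ∪ extra)).map
      (QuotientGroup.mk' (Subgroup.normalClosure rels))) := this
  exact (@QuotientGroup.quotientMulEquivOfEq (PresentedGroup rels) _ _ _ Subgroup.normalClosure_normal this hmap.symm).trans
    (QuotientGroup.quotientQuotientEquivQuotient _ _ hle)

section VonDyck

variable {G : Type*} [Group G] {s t : G}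

lemma vonDyck_surj (hs : s ^ 2 = 1) (ht : t ^ 4 = 1) (hst : (s * t) ^ 3 = 1)
    (hgen : Subgroup.closure ({s, t} : Set G) = ⊤) :
    Function.Surjective (fun p : Fin 6 × Fin 4 =>
      (![1, s, t * s, s * (t * s), t * (t * s), s * (t * (t * s))] p.1) * t ^ (p.2 : ℕ)) := by
  have hss : s * s = 1 := by rw [← pow_two]; exact hs
  have hsinv : s⁻¹ = s := by
    rw [← mul_one s⁻¹, ← hss, ← mul_assoc, inv_mul_cancel, one_mul]
  have htinv : t⁻¹ = t ^ 3 := by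
    have h : t ^ 3 * t = 1 := by rw [← pow_succ]; exact ht
    rw [← mul_eq_one_iff_eq_inv.1 h]
  have hmod : ∀ m : ℕ, t ^ (m + 4) = t ^ m := by
    intro m; rw [pow_add, ht, mul_one]
  have e1 : (s * t) ^ 2 = (s * t)⁻¹ := by
    apply mul_eq_one_iff_eq_inv.1
    rw [← pow_succ]; exact hst
  have e2 : (t * s) ^ 3 = 1 := by
    rw [show (t * s) ^ 3 = t * (s * t) ^ 3 * t⁻¹ by simp [pow_succ, mul_assoc], hst]
    simp
  have e3 : (t * s) ^ 2 = (t * s)⁻¹ := by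
    apply mul_eq_one_iff_eq_inv.1
    rw [← pow_succ]; exact e2
  have d1 : t * (s * t) = s * (t ^ 3 * s) := by
    have h : (t * (s * t)) * (s * (t * s)) = 1 := by
      rw [show (t * (s * t)) * (s * (t * s)) = (t * s) ^ 3 by simp [pow_succ, mul_assoc]]
      exact e2
    rw [mul_eq_one_iff_eq_inv.1 h, mul_inv_rev, mul_inv_rev, hsinv, htinv, mul_assoc]
  have d2 : s * (t * s) = t ^ 3 * (s * t ^ 3) := by
    calc s * (t * s) = (s * t) ^ 2 * t⁻¹ := by simp [pow_succ, mul_assoc]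
      _ = (s * t)⁻¹ * t⁻¹ := by rw [e1]
      _ = t⁻¹ * (s⁻¹ * t⁻¹) := by rw [mul_inv_rev, mul_assoc]
      _ = t ^ 3 * (s * t ^ 3) := by rw [hsinv, htinv]
  have I1 : t * (s * (t * s)) = s * t ^ 3 := by
    calc t * (s * (t * s)) = (t * s) ^ 2 := by simp [pow_succ, mul_assoc]
      _ = (t * s)⁻¹ := e3
      _ = s⁻¹ * t⁻¹ := by rw [mul_inv_rev]
      _ = s * t ^ 3 := by rw [hsinv, htinv]
  have I2 : t * (t * (t * s)) = s * (t * s) * t := by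
    calc t * (t * (t * s)) = t ^ 3 * s := by simp [pow_succ, mul_assoc]
      _ = t⁻¹ * s⁻¹ := by rw [hsinv, htinv]
      _ = (s * t)⁻¹ := by rw [mul_inv_rev]
      _ = (s * t) ^ 2 := e1.symm
      _ = s * (t * s) * t := by simp [pow_succ, mul_assoc]
  have I3 : t * (s * (t * (t * s))) = s * (t * (t * s)) * t ^ 3 := by
    have h6 : t ^ 6 = t ^ 2 := by rw [show (6 : ℕ) = 2 + 4 from rfl, hmod]
    calc t * (s * (t * (t * s))) = (t * (s * t)) * (t * s) := by simp [mul_assoc]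
      _ = (s * (t ^ 3 * s)) * (t * s) := by rw [d1]
      _ = s * (t ^ 3 * (s * (t * s))) := by simp [mul_assoc]
      _ = s * (t ^ 3 * (t ^ 3 * (s * t ^ 3))) := by rw [d2]
      _ = s * (t ^ 6 * (s * t ^ 3)) := by
            rw [show (6:ℕ) = 3 + 3 from rfl, pow_add]; simp [mul_assoc]
      _ = s * (t ^ 2 * (s * t ^ 3)) := by rw [h6]
      _ = s * (t * (t * s)) * t ^ 3 := by simp [pow_succ, mul_assoc]
  have hmod4 : ∀ m : ℕ, t ^ m = t ^ (m % 4) := by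
    intro m
    conv_lhs => rw [← Nat.div_add_mod m 4]
    rw [pow_add, pow_mul, ht, one_pow, one_mul]
  have hshift : ∀ (x : G) (j k : Fin 4),
      x * t ^ (j : ℕ) * t ^ (k : ℕ) = x * t ^ ((j + k : Fin 4) : ℕ) := by
    intro x j k
    rw [mul_assoc, ← pow_add]
    congr 1
    rw [Fin.val_add]
    exact hmod4 _
  set F : Fin 6 × Fin 4 → G := fun p =>
    (![1, s, t * s, s * (t * s), t * (t * s), s * (t * (t * s))] p.1) * t ^ (p.2 : ℕ) with hF
  have hcyc : ∀ k : Fin 4, t * t ^ (k : ℕ) = t ^ (((1 : Fin 4) + k : Fin 4) : ℕ) := by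
    intro k
    have := hshift 1 1 k
    simpa using this
  set D : Set G := Set.range F with hD
  have hD1 : (1 : G) ∈ D := ⟨(0, 0), by simp [hF]⟩
  have hDs : ∀ x ∈ D, s * x ∈ D := by
    rintro _ ⟨⟨i, k⟩, rfl⟩
    fin_cases i
    · refine ⟨(1, k), ?_⟩
      show s * t ^ (k:ℕ) = s * ((1:G) * t ^ (k:ℕ))
      simp only [← mul_assoc, hss, one_mul, mul_one]
    · refine ⟨(0, k), ?_⟩
      show (1:G) * t ^ (k:ℕ) = s * (s * t ^ (k:ℕ))
      simp only [← mul_assoc, hss, one_mul, mul_one]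
    · refine ⟨(3, k), ?_⟩
      show s * (t * s) * t ^ (k:ℕ) = s * (t * s * t ^ (k:ℕ))
      simp only [← mul_assoc, hss, one_mul, mul_one]
    · refine ⟨(2, k), ?_⟩
      show t * s * t ^ (k:ℕ) = s * (s * (t * s) * t ^ (k:ℕ))
      simp only [← mul_assoc, hss, one_mul, mul_one]
    · refine ⟨(5, k), ?_⟩
      show s * (t * (t * s)) * t ^ (k:ℕ) = s * (t * (t * s) * t ^ (k:ℕ))
      simp only [← mul_assoc, hss, one_mul, mul_one]
    · refine ⟨(4, k), ?_⟩
      show t * (t * s) * t ^ (k:ℕ) = s * (s * (t * (t * s)) * t ^ (k:ℕ))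
      simp only [← mul_assoc, hss, one_mul, mul_one]
  have hDt : ∀ x ∈ D, t * x ∈ D := by
    rintro _ ⟨⟨i, k⟩, rfl⟩
    fin_cases i
    · refine ⟨(0, 1 + k), ?_⟩
      show (1:G) * t ^ (((1:Fin 4) + k : Fin 4) : ℕ) = t * ((1:G) * t ^ (k:ℕ))
      rw [one_mul, one_mul, hcyc]
    · refine ⟨(2, k), ?_⟩
      show t * s * t ^ (k:ℕ) = t * (s * t ^ (k:ℕ))
      simp only [← mul_assoc]
    · refine ⟨(4, k), ?_⟩
      show t * (t * s) * t ^ (k:ℕ) = t * (t * s * t ^ (k:ℕ))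
      simp only [← mul_assoc]
    · refine ⟨(1, 3 + k), ?_⟩
      show s * t ^ (((3:Fin 4) + k : Fin 4) : ℕ) = t * (s * (t * s) * t ^ (k:ℕ))
      rw [← hshift s 3 k, show ((3 : Fin 4) : ℕ) = 3 from rfl, ← I1]
      simp only [← mul_assoc]
    · refine ⟨(3, 1 + k), ?_⟩
      show s * (t * s) * t ^ (((1:Fin 4) + k : Fin 4) : ℕ) = t * (t * (t * s) * t ^ (k:ℕ))
      rw [← hshift (s * (t * s)) 1 k, show ((1 : Fin 4) : ℕ) = 1 from rfl, pow_one, ← I2]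
      simp only [← mul_assoc]
    · refine ⟨(5, 3 + k), ?_⟩
      show s * (t * (t * s)) * t ^ (((3:Fin 4) + k : Fin 4) : ℕ)
          = t * (s * (t * (t * s)) * t ^ (k:ℕ))
      rw [← hshift (s * (t * (t * s))) 3 k, show ((3 : Fin 4) : ℕ) = 3 from rfl, ← I3]
      simp only [← mul_assoc]
  have hDt3 : ∀ x ∈ D, t⁻¹ * x ∈ D := by
    intro x hx
    rw [htinv, show t ^ 3 * x = t * (t * (t * x)) by simp [pow_succ, mul_assoc]]
    exact hDt _ (hDt _ (hDt _ hx))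
  have hDsinv : ∀ x ∈ D, s⁻¹ * x ∈ D := by
    intro x hx; rw [hsinv]; exact hDs x hx
  have key : ∀ g : G, (∀ x ∈ D, g * x ∈ D) ∧ (∀ x ∈ D, g⁻¹ * x ∈ D) := by
    intro g
    have hg : g ∈ Subgroup.closure ({s, t} : Set G) := by rw [hgen]; trivial
    induction hg using Subgroup.closure_induction with
    | mem z hz =>
      rcases hz with rfl | rfl
      · exact ⟨hDs, hDsinv⟩
      · exact ⟨hDt, hDt3⟩
    | one => simp
    | mul a b _ _ ha hb =>
      refine ⟨fun x hx => ?_, fun x hx => ?_⟩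
      · rw [mul_assoc]; exact ha.1 _ (hb.1 _ hx)
      · rw [mul_inv_rev, mul_assoc]; exact hb.2 _ (ha.2 _ hx)
    | inv a _ ha =>
      exact ⟨by simpa using ha.2, by simpa using ha.1⟩
  intro g
  have : g ∈ D := by
    have := (key g).1 1 hD1
    simpa using this
  exact this

lemma vonDyck_finite_card (hs : s ^ 2 = 1) (ht : t ^ 4 = 1) (hst : (s * t) ^ 3 = 1)
    (hgen : Subgroup.closure ({s, t} : Set G) = ⊤) :
    Finite G ∧ Nat.card G ≤ 24 := by
  have hsurj := vonDyck_surj hs ht hst hgen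
  have hfin : Finite G := Finite.of_surjective _ hsurj
  refine ⟨hfin, ?_⟩
  have := Nat.card_le_card_of_surjective _ hsurj
  simpa using this

end VonDyck



instance : DecidableEq SL2Z4 := fun a b => decidable_of_iff (a.1 = b.1) Subtype.ext_iff.symm

def Sm : SL2Z4 := ⟨!![0, 1; -1, 0], by decide⟩
def Tm : SL2Z4 := ⟨!![1, 0; 1, 1], by decide⟩
def Um : SL2Z4 := ⟨!![-1, 0; 0, -1], by decide⟩

def stStep (X : Finset SL2Z4) : Finset SL2Z4 := X ∪ X.image (· * Sm) ∪ X.image (· * Tm)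

lemma stStep_subset {X : Finset SL2Z4} (h : (X : Set SL2Z4) ⊆ Subgroup.closure {Sm, Tm}) :
    (stStep X : Set SL2Z4) ⊆ Subgroup.closure {Sm, Tm} := by
  intro x hx
  simp only [stStep, Finset.coe_union, Set.mem_union, Finset.mem_coe, Finset.mem_image] at hx
  have hS : Sm ∈ Subgroup.closure ({Sm, Tm} : Set SL2Z4) :=
    Subgroup.subset_closure (by simp)
  have hT : Tm ∈ Subgroup.closure ({Sm, Tm} : Set SL2Z4) :=
    Subgroup.subset_closure (by simp)
  rcases hx with (hx | ⟨y, hy, rfl⟩) | ⟨y, hy, rfl⟩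
  · exact h hx
  · exact mul_mem (h hy) hS
  · exact mul_mem (h hy) hT

set_option maxRecDepth 40000 in
set_option maxHeartbeats 4000000 in
lemma univ_subset_reach : (Finset.univ : Finset SL2Z4) ⊆ stStep^[8] {1} := by decide

lemma closure_SmTm : Subgroup.closure ({Sm, Tm} : Set SL2Z4) = ⊤ := by
  rw [eq_top_iff]
  intro g _
  have hreach : ((stStep^[8] {1} : Finset SL2Z4) : Set SL2Z4) ⊆ Subgroup.closure {Sm, Tm} := by
    have base : (({1} : Finset SL2Z4) : Set SL2Z4) ⊆ Subgroup.closure {Sm, Tm} := by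
      intro x hx; simp only [Finset.coe_singleton, Set.mem_singleton_iff] at hx
      exact hx ▸ one_mem _
    have : ∀ n, ((stStep^[n] {1} : Finset SL2Z4) : Set SL2Z4) ⊆ Subgroup.closure {Sm, Tm} := by
      intro n; induction n with
      | zero => exact base
      | succ n ih => rw [Function.iterate_succ_apply']; exact stStep_subset ih
    exact this 8
  exact hreach (univ_subset_reach (Finset.mem_univ g))

lemma card_SL2Z4 : Nat.card SL2Z4 = 48 := by
  rw [Nat.card_eq_fintype_card]; decide

lemma center_sub : ∀ g : SL2Z4, (∀ h : SL2Z4, h * g = g * h) → g = 1 ∨ g = Um := by decide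

lemma Um_mem_center : Um ∈ Subgroup.center SL2Z4 := by
  rw [Subgroup.mem_center_iff]; intro g; revert g; decide

lemma center_le_zpowers : Subgroup.center SL2Z4 ≤ Subgroup.zpowers Um := by
  intro g hg
  rcases center_sub g (fun h => (Subgroup.mem_center_iff.1 hg h)) with rfl | rfl
  · exact one_mem _
  · exact Subgroup.mem_zpowers _

lemma orderOf_Um : orderOf Um = 2 := by
  have h1 : Um ^ 2 = 1 := by decide
  have h2 : orderOf Um ∣ 2 := orderOf_dvd_of_pow_eq_one h1
  have h3 : Um ≠ 1 := by decide
  have h4 : orderOf Um ≠ 1 := fun h => h3 (orderOf_eq_one_iff.1 h)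
  rcases (Nat.dvd_prime Nat.prime_two).1 h2 with h | h
  · exact absurd h h4
  · exact h

lemma center_eq : Subgroup.center SL2Z4 = Subgroup.zpowers Um := by
  refine le_antisymm center_le_zpowers ?_
  rw [Subgroup.zpowers_le]
  exact Um_mem_center

lemma card_center : Nat.card (Subgroup.center SL2Z4) = 2 := by
  rw [center_eq, Nat.card_zpowers, orderOf_Um]

lemma card_PSL2Z4 : Nat.card PSL2Z4 = 24 := by
  have h := Subgroup.card_eq_card_quotient_mul_card_subgroup (Subgroup.center SL2Z4)
  rw [card_SL2Z4, card_center] at h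
  show Nat.card (SL2Z4 ⧸ Subgroup.center SL2Z4) = 24
  omega



/-- Relators for `SL₂(ℤ/4)` on two generators `0 ↦ S`, `1 ↦ T`. -/
def R48 : Set (FreeGroup (Fin 2)) :=
  { (FreeGroup.of 0) ^ 4,
    (FreeGroup.of 0 * FreeGroup.of 1) ^ 3 * ((FreeGroup.of 0) ^ 2)⁻¹,
    (FreeGroup.of 1) ^ 4 }

abbrev P48 := PresentedGroup R48

lemma range_fin_two {β : Type*} (f : Fin 2 → β) : Set.range f = {f 0, f 1} := by
  ext x
  constructor
  · rintro ⟨i, rfl⟩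
    fin_cases i <;> simp
  · rintro (rfl | rfl) <;> [exact ⟨0, rfl⟩; exact ⟨1, rfl⟩]

lemma P48_gen : Subgroup.closure ({PresentedGroup.of 0, PresentedGroup.of 1} : Set P48) = ⊤ := by
  rw [← range_fin_two (fun i => (PresentedGroup.of i : P48))]
  exact PresentedGroup.closure_range_of _

lemma relOne {α : Type*} {rels : Set (FreeGroup α)} {r : FreeGroup α} (h : r ∈ rels) :
    PresentedGroup.mk rels r = 1 :=
  (QuotientGroup.eq_one_iff _).2 (Subgroup.subset_normalClosure h)

/-- The hom `P48 → SL₂(ℤ/4)`. -/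
def phi48 : P48 →* SL2Z4 :=
  PresentedGroup.toGroup (f := fun i => ![Sm, Tm] i) (by
    intro r hr
    rcases hr with rfl | rfl | rfl <;>
      simp only [map_mul, map_pow, map_inv, FreeGroup.lift_apply_of] <;> decide)

@[simp] lemma phi48_of0 : phi48 (PresentedGroup.of 0) = Sm := PresentedGroup.toGroup.of _
@[simp] lemma phi48_of1 : phi48 (PresentedGroup.of 1) = Tm := PresentedGroup.toGroup.of _

lemma phi48_surj : Function.Surjective phi48 := by
  rw [← MonoidHom.range_eq_top]
  rw [eq_top_iff, ← closure_SmTm, Subgroup.closure_le]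
  rintro x (rfl | rfl)
  · exact ⟨PresentedGroup.of 0, phi48_of0⟩
  · exact ⟨PresentedGroup.of 1, phi48_of1⟩

-- central element z = S²
lemma z_central : (PresentedGroup.of 0 : P48) ^ 2 ∈ Subgroup.center P48 := by
  set a : P48 := PresentedGroup.of 0
  set b : P48 := PresentedGroup.of 1
  have ha4 : a ^ 4 = 1 := by
    have := relOne (rels := R48) (r := (FreeGroup.of 0) ^ 4) (by simp [R48])
    simpa [a, map_pow, PresentedGroup.of] using this
  have hab : (a * b) ^ 3 = a ^ 2 := by
    have := relOne (rels := R48) (r := (FreeGroup.of 0 * FreeGroup.of 1) ^ 3 *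
      ((FreeGroup.of 0) ^ 2)⁻¹) (by simp [R48])
    simp only [map_mul, map_pow, map_inv] at this
    rw [mul_inv_eq_one] at this
    exact this
  rw [Subgroup.mem_center_iff]
  intro g
  have hca : Commute (a ^ 2) a := (Commute.refl a).pow_left 2
  have hcab : Commute (a ^ 2) (a * b) := by
    rw [← hab]; exact (Commute.refl (a * b)).pow_left 3
  have hcb : Commute (a ^ 2) b := by
    have := hca.inv_right.mul_right hcab
    simpa [← mul_assoc] using this
  -- every element commutes with a^2
  have : ∀ x : P48, Commute (a ^ 2) x := by
    intro x
    have hx : x ∈ Subgroup.closure ({a, b} : Set P48) := by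
      rw [P48_gen]; trivial
    induction hx using Subgroup.closure_induction with
    | mem z hz => rcases hz with rfl | rfl; exacts [hca, hcb]
    | one => exact Commute.one_right _
    | mul u v _ _ hu hv => exact hu.mul_right hv
    | inv u _ hu => exact hu.inv_right
  exact ((this g).symm : g * a ^ 2 = a ^ 2 * g)

/-- relators for `PSL₂(ℤ/4)`: add the relation `S² = 1`. -/
def R24 : Set (FreeGroup (Fin 2)) := R48 ∪ {(FreeGroup.of 0) ^ 2}

abbrev P24 := PresentedGroup R24

lemma P24_gen : Subgroup.closure ({PresentedGroup.of 0, PresentedGroup.of 1} : Set P24) = ⊤ := by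
  rw [← range_fin_two (fun i => (PresentedGroup.of i : P24))]
  exact PresentedGroup.closure_range_of _

lemma P24_finite_card : Finite P24 ∧ Nat.card P24 ≤ 24 := by
  set a : P24 := PresentedGroup.of 0
  set b : P24 := PresentedGroup.of 1
  have ha2 : a ^ 2 = 1 := by
    have := relOne (rels := R24) (r := (FreeGroup.of 0) ^ 2) (Or.inr rfl)
    simpa [a, map_pow, PresentedGroup.of] using this
  have hb4 : b ^ 4 = 1 := by
    have := relOne (rels := R24) (r := (FreeGroup.of 1) ^ 4) (Or.inl (by simp [R48]))
    simpa [b, map_pow, PresentedGroup.of] using this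
  have hab : (a * b) ^ 3 = a ^ 2 := by
    have := relOne (rels := R24) (r := (FreeGroup.of 0 * FreeGroup.of 1) ^ 3 *
      ((FreeGroup.of 0) ^ 2)⁻¹) (Or.inl (by simp [R48]))
    simp only [map_mul, map_pow, map_inv] at this
    rw [mul_inv_eq_one] at this
    exact this
  exact vonDyck_finite_card ha2 hb4 (by rw [hab, ha2]) P24_gen

noncomputable instance : Finite P24 := P24_finite_card.1

/-- `P48 / <z>` is `P24`. -/
noncomputable def P48quotEquiv :
    (P48 ⧸ Subgroup.normalClosure ((PresentedGroup.mk R48) '' {(FreeGroup.of 0) ^ 2})) ≃* P24 :=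
  presentedQuotEquiv R48 {(FreeGroup.of 0) ^ 2}

lemma ncl_z_eq :
    Subgroup.normalClosure ((PresentedGroup.mk R48) '' {(FreeGroup.of 0) ^ 2}) =
      Subgroup.zpowers ((PresentedGroup.of 0 : P48) ^ 2) := by
  have himg : (PresentedGroup.mk R48) '' {(FreeGroup.of 0) ^ 2} =
      {(PresentedGroup.of 0 : P48) ^ 2} := by
    rw [Set.image_singleton, map_pow]; rfl
  rw [himg]
  haveI hnormal : (Subgroup.zpowers ((PresentedGroup.of 0 : P48) ^ 2)).Normal := by
    constructor
    intro n hn g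
    have hc := Subgroup.mem_center_iff.1 z_central
    rcases Subgroup.mem_zpowers_iff.1 hn with ⟨m, rfl⟩
    have : g * ((PresentedGroup.of 0 : P48) ^ 2) ^ m * g⁻¹ =
        ((PresentedGroup.of 0 : P48) ^ 2) ^ m := by
      have hcm : Commute ((PresentedGroup.of 0 : P48) ^ 2) g :=
        ((hc g).symm : _ = _)
      rw [(hcm.zpow_left m).symm.eq, mul_assoc, mul_inv_cancel, mul_one]
    rw [this]
    exact Subgroup.mem_zpowers_iff.2 ⟨m, rfl⟩
  apply le_antisymm
  · exact Subgroup.normalClosure_le_normal (by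
      intro x hx
      rw [Set.mem_singleton_iff] at hx
      exact hx ▸ Subgroup.mem_zpowers _)
  · rw [Subgroup.zpowers_le]
    exact Subgroup.subset_normalClosure rfl

lemma P48_finite_card : Finite P48 ∧ Nat.card P48 ≤ 48 := by
  set z : P48 := (PresentedGroup.of 0 : P48) ^ 2 with hz
  have hz2 : z ^ 2 = 1 := by
    have := relOne (rels := R48) (r := (FreeGroup.of 0) ^ 4) (by simp [R48])
    rw [hz, ← pow_mul]
    simpa [map_pow, PresentedGroup.of] using this
  have hfo : IsOfFinOrder z := isOfFinOrder_iff_pow_eq_one.2 ⟨2, two_pos, hz2⟩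
  haveI : Finite (Subgroup.zpowers z) := hfo.finite_zpowers
  have hcardz : Nat.card (Subgroup.zpowers z) ≤ 2 := by
    rw [Nat.card_zpowers]
    exact Nat.le_of_dvd two_pos (orderOf_dvd_of_pow_eq_one hz2)
  haveI : (Subgroup.normalClosure ((PresentedGroup.mk R48) '' {(FreeGroup.of 0) ^ 2})).Normal :=
    Subgroup.normalClosure_normal
  have hquot : Nat.card (P48 ⧸ Subgroup.zpowers z) ≤ 24 := by
    haveI : (Subgroup.zpowers z).Normal := ncl_z_eq ▸ Subgroup.normalClosure_normal
    have e : (P48 ⧸ Subgroup.zpowers z) ≃* P24 :=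
      (QuotientGroup.quotientMulEquivOfEq ncl_z_eq.symm).trans P48quotEquiv
    rw [Nat.card_congr e.toEquiv]
    exact P24_finite_card.2
  have hfinq : Finite (P48 ⧸ Subgroup.zpowers z) := by
    haveI : (Subgroup.zpowers z).Normal := ncl_z_eq ▸ Subgroup.normalClosure_normal
    have e : (P48 ⧸ Subgroup.zpowers z) ≃* P24 :=
      (QuotientGroup.quotientMulEquivOfEq ncl_z_eq.symm).trans P48quotEquiv
    exact Finite.of_equiv _ e.symm.toEquiv
  have hfin : Finite P48 :=
    Finite.of_equiv _ (Subgroup.groupEquivQuotientProdSubgroup (s := Subgroup.zpowers z)).symm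
  refine ⟨hfin, ?_⟩
  have hcards := Subgroup.card_eq_card_quotient_mul_card_subgroup (Subgroup.zpowers z)
  calc Nat.card P48 = Nat.card (P48 ⧸ Subgroup.zpowers z) * Nat.card (Subgroup.zpowers z) :=
        hcards
    _ ≤ 24 * 2 := Nat.mul_le_mul hquot hcardz
    _ = 48 := rfl

/-- the isomorphism `P48 ≃* SL₂(ℤ/4)`. -/
noncomputable def e48 : P48 ≃* SL2Z4 := by
  haveI : Finite P48 := P48_finite_card.1
  refine MulEquiv.ofBijective phi48 (phi48_surj.bijective_of_nat_card_le ?_)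
  rw [card_SL2Z4]
  exact P48_finite_card.2

@[simp] lemma e48_of0 : e48 (PresentedGroup.of 0) = Sm := phi48_of0
@[simp] lemma e48_of1 : e48 (PresentedGroup.of 1) = Tm := phi48_of1
@[simp] lemma e48_symm_Sm : e48.symm Sm = PresentedGroup.of 0 := by
  rw [MulEquiv.symm_apply_eq, e48_of0]
@[simp] lemma e48_symm_Tm : e48.symm Tm = PresentedGroup.of 1 := by
  rw [MulEquiv.symm_apply_eq, e48_of1]

-- === PSL side ===
lemma Um_mk_eq_one : ((Um : SL2Z4) : PSL2Z4) = 1 :=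
  (QuotientGroup.eq_one_iff _).2 Um_mem_center

lemma Sm_sq : Sm * Sm = Um := by decide

def phi24 : P24 →* PSL2Z4 :=
  PresentedGroup.toGroup (f := fun i => ![((Sm : SL2Z4) : PSL2Z4), ((Tm : SL2Z4) : PSL2Z4)] i) (by
    intro r hr
    have hmm : ∀ x y : SL2Z4, ((x : PSL2Z4) * (y : PSL2Z4)) = ((x * y : SL2Z4) : PSL2Z4) := fun _ _ => rfl
    rcases hr with (rfl | rfl | rfl) | rfl <;>
      simp only [map_mul, map_pow, map_inv, FreeGroup.lift_apply_of, Matrix.cons_val_zero,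
        Matrix.cons_val_one, Matrix.head_cons]
    · rw [show ((Sm : SL2Z4) : PSL2Z4) ^ 4 = ((Sm ^ 4 : SL2Z4) : PSL2Z4) from rfl,
        show (Sm : SL2Z4) ^ 4 = 1 by decide]; rfl
    · rw [show ((Sm : SL2Z4) : PSL2Z4) * ((Tm : SL2Z4) : PSL2Z4) = ((Sm * Tm : SL2Z4) : PSL2Z4)
        from rfl,
        show ((Sm * Tm : SL2Z4) : PSL2Z4) ^ 3 = (((Sm * Tm) ^ 3 : SL2Z4) : PSL2Z4) from rfl,
        show ((Sm : SL2Z4) : PSL2Z4) ^ 2 = ((Sm ^ 2 : SL2Z4) : PSL2Z4) from rfl,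
        show ((Sm * Tm : SL2Z4)) ^ 3 = Sm ^ 2 by decide]
      simp
    · rw [show ((Tm : SL2Z4) : PSL2Z4) ^ 4 = ((Tm ^ 4 : SL2Z4) : PSL2Z4) from rfl,
        show (Tm : SL2Z4) ^ 4 = 1 by decide]; rfl
    · rw [show ((Sm : SL2Z4) : PSL2Z4) ^ 2 = ((Sm ^ 2 : SL2Z4) : PSL2Z4) from rfl,
        show (Sm : SL2Z4) ^ 2 = Um by decide]
      exact Um_mk_eq_one)

@[simp] lemma phi24_of0 : phi24 (PresentedGroup.of 0) = ((Sm : SL2Z4) : PSL2Z4) :=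
  PresentedGroup.toGroup.of _
@[simp] lemma phi24_of1 : phi24 (PresentedGroup.of 1) = ((Tm : SL2Z4) : PSL2Z4) :=
  PresentedGroup.toGroup.of _

lemma closure_PSL : Subgroup.closure ({((Sm : SL2Z4) : PSL2Z4), ((Tm : SL2Z4) : PSL2Z4)} : Set PSL2Z4) = ⊤ := by
  have h := congrArg (Subgroup.map (QuotientGroup.mk' (Subgroup.center SL2Z4))) closure_SmTm
  rw [MonoidHom.map_closure] at h
  rw [show ((QuotientGroup.mk' (Subgroup.center SL2Z4)) '' {Sm, Tm}) =
    {((Sm : SL2Z4) : PSL2Z4), ((Tm : SL2Z4) : PSL2Z4)} by rw [Set.image_insert_eq, Set.image_singleton]; rfl] at h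
  rw [h]
  exact Subgroup.map_top_of_surjective _ (QuotientGroup.mk'_surjective _)

lemma phi24_surj : Function.Surjective phi24 := by
  rw [← MonoidHom.range_eq_top, eq_top_iff, ← closure_PSL, Subgroup.closure_le]
  rintro x (rfl | rfl)
  · exact ⟨PresentedGroup.of 0, phi24_of0⟩
  · exact ⟨PresentedGroup.of 1, phi24_of1⟩

noncomputable def e24 : P24 ≃* PSL2Z4 := by
  refine MulEquiv.ofBijective phi24 (phi24_surj.bijective_of_nat_card_le ?_)
  rw [card_PSL2Z4]
  exact P24_finite_card.2

@[simp] lemma e24_of0 : e24 (PresentedGroup.of 0) = ((Sm : SL2Z4) : PSL2Z4) := phi24_of0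
@[simp] lemma e24_of1 : e24 (PresentedGroup.of 1) = ((Tm : SL2Z4) : PSL2Z4) := phi24_of1
@[simp] lemma e24_symm_Sm : e24.symm ((Sm : SL2Z4) : PSL2Z4) = PresentedGroup.of 0 := by
  rw [MulEquiv.symm_apply_eq, e24_of0]
@[simp] lemma e24_symm_Tm : e24.symm ((Tm : SL2Z4) : PSL2Z4) = PresentedGroup.of 1 := by
  rw [MulEquiv.symm_apply_eq, e24_of1]



/-- the extra relators `u₁²`, `u₂²`, `U²u₂⁻²u₁⁻²`. -/
def extraRels : Set (FreeGroup (Fin 5)) :=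
  { (FreeGroup.of 0) ^ 2, (FreeGroup.of 1) ^ 2,
    (FreeGroup.of 2) ^ 2 * ((FreeGroup.of 1) ^ 2)⁻¹ * ((FreeGroup.of 0) ^ 2)⁻¹ }

abbrev Qgrp (N : ℕ) := PresentedGroup (mcpRels N ∪ extraRels)

variable {N : ℕ}

def qa : Qgrp N := PresentedGroup.of 0
def qb : Qgrp N := PresentedGroup.of 1
def qc : Qgrp N := PresentedGroup.of 2
def qd : Qgrp N := PresentedGroup.of 3
def qe : Qgrp N := PresentedGroup.of 4

section rels
-- handy: relation as equation
lemma relQ {r : FreeGroup (Fin 5)} (h : r ∈ mcpRels N ∪ extraRels) :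
    FreeGroup.lift (fun i => (PresentedGroup.of i : Qgrp N)) r = 1 := by
  have : FreeGroup.lift (fun i => (PresentedGroup.of i : Qgrp N)) = PresentedGroup.mk _ := by
    apply FreeGroup.ext_hom; intro i; rfl
  rw [this]
  exact relOne h

lemma ha2 : (qa : Qgrp N) ^ 2 = 1 := by
  have := relQ (N := N) (Or.inr (Or.inl rfl))
  simpa [qa, map_pow] using this

lemma hb2 : (qb : Qgrp N) ^ 2 = 1 := by
  have := relQ (N := N) (Or.inr (Or.inr (Or.inl rfl)))
  simpa [qb, map_pow] using this

lemma hc2 : (qc : Qgrp N) ^ 2 = 1 := by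
  have h := relQ (N := N) (Or.inr (Or.inr (Or.inr rfl)))
  simp only [map_mul, map_pow, map_inv, FreeGroup.lift_apply_of] at h
  have h' : (qc : Qgrp N) ^ 2 * ((qb : Qgrp N) ^ 2)⁻¹ * ((qa : Qgrp N) ^ 2)⁻¹ = 1 := h
  rwa [ha2, hb2, inv_one, mul_one, mul_one] at h'

lemma hcN : (qc : Qgrp N) ^ N = 1 := by
  have := relQ (N := N) (Or.inl (by
    unfold mcpRels
    right; right; right; right; right; left; rfl))
  simpa [qc, map_pow] using this

lemma ha2N : True := trivial

lemma hbinv : (qb : Qgrp N)⁻¹ = qb := by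
  have : qb * qb = (1 : Qgrp N) := by rw [← pow_two]; exact hb2
  rw [← mul_eq_one_iff_eq_inv.1 this]

lemma hainv : (qa : Qgrp N)⁻¹ = qa := by
  have : qa * qa = (1 : Qgrp N) := by rw [← pow_two]; exact ha2
  rw [← mul_eq_one_iff_eq_inv.1 this]

lemma hcinv : (qc : Qgrp N)⁻¹ = qc := by
  have : qc * qc = (1 : Qgrp N) := by rw [← pow_two]; exact hc2
  rw [← mul_eq_one_iff_eq_inv.1 this]

lemma comm_ab : (qa : Qgrp N) * qb = qb * qa := by
  have h := relQ (N := N) (Or.inl (by unfold mcpRels; left; rfl))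
  simp only [map_mul, map_pow, map_inv, FreeGroup.lift_apply_of] at h
  rw [mul_inv_eq_one] at h
  have h' : (qa : Qgrp N) * qb * qa⁻¹ = qc ^ 2 * (qb⁻¹) ^ 3 := h
  rw [hc2, one_mul, hbinv, pow_succ, hb2, one_mul] at h'
  calc (qa : Qgrp N) * qb = qa * qb * qa⁻¹ * qa := by rw [mul_assoc, inv_mul_cancel, mul_one]
    _ = qb * qa := by rw [h']

lemma comm_ac : (qa : Qgrp N) * qc = qc * qa := by
  have h := relQ (N := N) (Or.inl (by unfold mcpRels; right; left; rfl))
  simp only [map_mul, map_pow, map_inv, FreeGroup.lift_apply_of] at h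
  rw [mul_inv_eq_one] at h
  have h' : (qa : Qgrp N) * qc * qa⁻¹ = qc⁻¹ * qa ^ 2 := h
  rw [ha2, mul_one, hcinv] at h'
  calc (qa : Qgrp N) * qc = qa * qc * qa⁻¹ * qa := by rw [mul_assoc, inv_mul_cancel, mul_one]
    _ = qc * qa := by rw [h']

lemma comm_bc : (qb : Qgrp N) * qc = qc * qb := by
  have h := relQ (N := N) (Or.inl (by unfold mcpRels; right; right; left; rfl))
  simp only [map_mul, map_pow, map_inv, FreeGroup.lift_apply_of] at h
  rw [mul_inv_eq_one] at h
  have h' : (qb : Qgrp N) * qc * qb⁻¹ = qc⁻¹ * qb ^ 2 := h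
  rw [hb2, mul_one, hcinv] at h'
  calc (qb : Qgrp N) * qc = qb * qc * qb⁻¹ * qb := by rw [mul_assoc, inv_mul_cancel, mul_one]
    _ = qc * qb := by rw [h']

lemma hd_a : (qd : Qgrp N) * qa * qd⁻¹ = qb := by
  have h := relQ (N := N) (Or.inl (by
    unfold mcpRels; right; right; right; right; right; right; left; rfl))
  simp only [map_mul, map_pow, map_inv, FreeGroup.lift_apply_of] at h
  rw [mul_inv_eq_one] at h
  exact h

lemma hd_b : (qd : Qgrp N) * qb * qd⁻¹ = qa := by
  have h := relQ (N := N) (Or.inl (by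
    unfold mcpRels; right; right; right; right; right; right; right; left; rfl))
  simp only [map_mul, map_pow, map_inv, FreeGroup.lift_apply_of] at h
  rw [mul_inv_eq_one] at h
  have h' : (qd : Qgrp N) * qb * qd⁻¹ = qc⁻¹ * qa * qc := h
  rw [h', hcinv, mul_assoc, comm_ac, ← mul_assoc, ← pow_two, hc2, one_mul]

lemma comm_dc : (qd : Qgrp N) * qc = qc * qd := by
  have h := relQ (N := N) (Or.inl (by
    unfold mcpRels; right; right; right; right; right; right; right; right; left; rfl))
  simp only [map_mul, map_pow, map_inv, FreeGroup.lift_apply_of] at h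
  rw [mul_inv_eq_one] at h
  have h' : (qd : Qgrp N) * qc * qd⁻¹ = qc := h
  calc (qd : Qgrp N) * qc = qd * qc * qd⁻¹ * qd := by rw [mul_assoc, inv_mul_cancel, mul_one]
    _ = qc * qd := by rw [h']

lemma he_a : (qe : Qgrp N) * qa * qe⁻¹ = qa * qb := by
  have h := relQ (N := N) (Or.inl (by
    unfold mcpRels
    right; right; right; right; right; right; right; right; right; left; rfl))
  simp only [map_mul, map_pow, map_inv, FreeGroup.lift_apply_of] at h
  rw [mul_inv_eq_one] at h
  have h' : (qe : Qgrp N) * qa * qe⁻¹ = qa * qb⁻¹ := h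
  rw [h', hbinv]

lemma he_b : (qe : Qgrp N) * qb * qe⁻¹ = qb := by
  have h := relQ (N := N) (Or.inl (by
    unfold mcpRels
    right; right; right; right; right; right; right; right; right; right; left; rfl))
  simp only [map_mul, map_pow, map_inv, FreeGroup.lift_apply_of] at h
  rw [mul_inv_eq_one] at h
  exact h

lemma comm_ec : (qe : Qgrp N) * qc = qc * qe := by
  have h := relQ (N := N) (Or.inl (by
    unfold mcpRels
    right; right; right; right; right; right; right; right; right; right; right; left; rfl))
  simp only [map_mul, map_pow, map_inv, FreeGroup.lift_apply_of] at h
  rw [mul_inv_eq_one] at h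
  have h' : (qe : Qgrp N) * qc * qe⁻¹ = qc := h
  calc (qe : Qgrp N) * qc = qe * qc * qe⁻¹ * qe := by rw [mul_assoc, inv_mul_cancel, mul_one]
    _ = qc * qe := by rw [h']

lemma hd2 : (qd : Qgrp N) ^ 2 = qc⁻¹ := by
  have h := relQ (N := N) (Or.inl (by
    unfold mcpRels
    right; right; right; right; right; right; right; right; right; right; right; right; left
    rfl))
  simp only [map_mul, map_pow, map_inv, FreeGroup.lift_apply_of] at h
  exact mul_eq_one_iff_eq_inv.1 h

lemma hde3 : ((qd : Qgrp N) * qe) ^ 3 = qc⁻¹ := by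
  have h := relQ (N := N) (Or.inl (by
    unfold mcpRels
    right; right; right; right; right; right; right; right; right; right; right; right; right
    left; rfl))
  simp only [map_mul, map_pow, map_inv, FreeGroup.lift_apply_of] at h
  exact mul_eq_one_iff_eq_inv.1 h

lemma he4 : (qe : Qgrp N) ^ 4 = 1 := by
  have h := relQ (N := N) (Or.inl (by
    unfold mcpRels
    right; right; right; right; right; right; right; right; right; right; right; right; right
    right; rfl))
  simp only [map_mul, map_pow, map_inv, FreeGroup.lift_apply_of] at h
  rw [mul_inv_eq_one] at h
  have h' : (qe : Qgrp N) ^ 4 = qb ^ 2 := h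
  rw [h', hb2]

lemma hd4 : (qd : Qgrp N) ^ 4 = 1 := by
  rw [show (4:ℕ) = 2 * 2 from rfl, pow_mul, hd2, inv_pow, hc2, inv_one]

lemma hc1 (hodd : Odd N) : (qc : Qgrp N) = 1 := by
  have h2 : orderOf (qc : Qgrp N) ∣ 2 := orderOf_dvd_of_pow_eq_one hc2
  have hN : orderOf (qc : Qgrp N) ∣ N := orderOf_dvd_of_pow_eq_one hcN
  have hcop : Nat.Coprime 2 N := Nat.coprime_two_left.2 hodd
  have h1 : orderOf (qc : Qgrp N) ∣ Nat.gcd 2 N := Nat.dvd_gcd h2 hN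
  rw [Nat.Coprime.gcd_eq_one hcop, Nat.dvd_one] at h1
  exact orderOf_eq_one_iff.1 h1

end rels
end MCPaux

namespace MCPaux2
open MCPaux SemidirectProduct

abbrev Tgt := Multiplicative V2 ⋊[actSL] SL2Z4

instance : DecidableEq Tgt := fun a b =>
  decidable_of_iff (a.left = b.left ∧ a.right = b.right)
    (by cases a; cases b; simp [SemidirectProduct.ext_iff])

def ee1 : Multiplicative V2 := Multiplicative.ofAdd ![1, 0]
def ee2 : Multiplicative V2 := Multiplicative.ofAdd ![0, 1]

lemma two_cases : ∀ x : ZMod 2, x = 0 ∨ x = 1 := by decide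

variable {N : ℕ}

lemma comm_pow_ab (m n : ℕ) : (qb : Qgrp N) ^ m * qa ^ n = qa ^ n * qb ^ m :=
  ((Commute.pow_pow (comm_ab : Commute (qa : Qgrp N) qb) n m).symm).eq

lemma pow_val_add {G : Type*} [Group G] (g : G) (hg : g ^ 2 = 1) (x y : ZMod 2) :
    g ^ ((x + y).val) = g ^ x.val * g ^ y.val := by
  rcases two_cases x with rfl | rfl <;> rcases two_cases y with rfl | rfl
  · show g ^ (0:ℕ) = g ^ (0:ℕ) * g ^ (0:ℕ); simp
  · show g ^ (1:ℕ) = g ^ (0:ℕ) * g ^ (1:ℕ); simp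
  · show g ^ (1:ℕ) = g ^ (1:ℕ) * g ^ (0:ℕ); simp
  · show g ^ (0:ℕ) = g ^ (1:ℕ) * g ^ (1:ℕ); simp [← pow_two, hg]

/-- The hom `(ℤ/2)² → Q`. -/
def f1 : Multiplicative V2 →* Qgrp N where
  toFun v := qa ^ ((Multiplicative.toAdd v) 0).val * qb ^ ((Multiplicative.toAdd v) 1).val
  map_one' := by
    show (qa : Qgrp N) ^ ((0:ZMod 2)).val * qb ^ ((0:ZMod 2)).val = 1
    simp [ZMod.val_zero]
  map_mul' u v := by
    show (qa : Qgrp N) ^ ((Multiplicative.toAdd u 0 + Multiplicative.toAdd v 0)).val *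
        qb ^ ((Multiplicative.toAdd u 1 + Multiplicative.toAdd v 1)).val = _
    rw [pow_val_add _ ha2, pow_val_add _ hb2]
    calc (qa:Qgrp N) ^ (Multiplicative.toAdd u 0).val * qa ^ (Multiplicative.toAdd v 0).val *
          (qb ^ (Multiplicative.toAdd u 1).val * qb ^ (Multiplicative.toAdd v 1).val)
        = qa ^ (Multiplicative.toAdd u 0).val * (qa ^ (Multiplicative.toAdd v 0).val *
          qb ^ (Multiplicative.toAdd u 1).val) * qb ^ (Multiplicative.toAdd v 1).val := by
          simp [mul_assoc]
      _ = qa ^ (Multiplicative.toAdd u 0).val * (qb ^ (Multiplicative.toAdd u 1).val *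
          qa ^ (Multiplicative.toAdd v 0).val) * qb ^ (Multiplicative.toAdd v 1).val := by
          rw [← comm_pow_ab]
      _ = _ := by simp [mul_assoc]

lemma f1_apply (w : V2) :
    (f1 (Multiplicative.ofAdd w) : Qgrp N) = qa ^ (w 0).val * qb ^ (w 1).val := rfl

lemma V2_eta (v : Multiplicative V2) :
    v = Multiplicative.ofAdd ![Multiplicative.toAdd v 0, Multiplicative.toAdd v 1] := by
  have : (Multiplicative.toAdd v) = ![Multiplicative.toAdd v 0, Multiplicative.toAdd v 1] := by
    funext i; fin_cases i <;> rfl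
  conv_lhs => rw [← ofAdd_toAdd v]
  exact congrArg Multiplicative.ofAdd this

/-- The hom `P48 → Q`. -/
def toQ48 : P48 →* Qgrp N :=
  PresentedGroup.toGroup (f := fun i => ![qd, qe] i) (by
    intro r hr
    rcases hr with rfl | rfl | rfl <;>
      simp only [map_mul, map_pow, map_inv, FreeGroup.lift_apply_of, Matrix.cons_val_zero,
        Matrix.cons_val_one, Matrix.head_cons]
    · exact hd4
    · rw [hde3, hd2]; simp
    · exact he4)

@[simp] lemma toQ48_of0 : (toQ48 (PresentedGroup.of 0) : Qgrp N) = qd := PresentedGroup.toGroup.of _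
@[simp] lemma toQ48_of1 : (toQ48 (PresentedGroup.of 1) : Qgrp N) = qe := PresentedGroup.toGroup.of _

/-- f₂ for the even case. -/
noncomputable def f2 : SL2Z4 →* Qgrp N := (toQ48).comp e48.symm.toMonoidHom

lemma e48_symm_Sm'  : e48.symm Sm = PresentedGroup.of 0 := by
  rw [MulEquiv.symm_apply_eq, e48_of0]
lemma e48_symm_Tm'  : e48.symm Tm = PresentedGroup.of 1 := by
  rw [MulEquiv.symm_apply_eq, e48_of1]

@[simp] lemma f2_Sm : (f2 Sm : Qgrp N) = qd := by
  show toQ48 (e48.symm Sm) = qd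
  rw [e48_symm_Sm, toQ48_of0]
@[simp] lemma f2_Tm : (f2 Tm : Qgrp N) = qe := by
  show toQ48 (e48.symm Tm) = qe
  rw [e48_symm_Tm, toQ48_of1]
@[simp] lemma f2_Um : (f2 Um : Qgrp N) = qc := by
  show toQ48 (e48.symm Um) = qc
  rw [← Sm_sq, map_mul, e48_symm_Sm, map_mul, toQ48_of0, ← pow_two, hd2, hcinv]

-- compatibility computations
lemma compat_Sm : ∀ v : Multiplicative V2,
    (f1 ((actSL Sm) v) : Qgrp N) = qd * f1 v * qd⁻¹ := by
  have key : ∀ x y : ZMod 2, (f1 ((actSL Sm) (Multiplicative.ofAdd ![x, y])) : Qgrp N) =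
      qd * f1 (Multiplicative.ofAdd ![x, y]) * qd⁻¹ := by
    intro x y
    rcases two_cases x with rfl | rfl <;> rcases two_cases y with rfl | rfl
    · rw [show (actSL Sm) (Multiplicative.ofAdd ![(0:ZMod 2), 0]) =
        Multiplicative.ofAdd ![0, 0] by decide]
      simp only [f1_apply]
      show (qa:Qgrp N) ^ (0:ℕ) * qb ^ (0:ℕ) = qd * (qa ^ (0:ℕ) * qb ^ (0:ℕ)) * qd⁻¹
      simp
    · rw [show (actSL Sm) (Multiplicative.ofAdd ![(0:ZMod 2), 1]) =
        Multiplicative.ofAdd ![1, 0] by decide]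
      simp only [f1_apply]
      show (qa:Qgrp N) ^ (1:ℕ) * qb ^ (0:ℕ) = qd * (qa ^ (0:ℕ) * qb ^ (1:ℕ)) * qd⁻¹
      simpa using hd_b.symm
    · rw [show (actSL Sm) (Multiplicative.ofAdd ![(1:ZMod 2), 0]) =
        Multiplicative.ofAdd ![0, 1] by decide]
      simp only [f1_apply]
      show (qa:Qgrp N) ^ (0:ℕ) * qb ^ (1:ℕ) = qd * (qa ^ (1:ℕ) * qb ^ (0:ℕ)) * qd⁻¹
      simpa using hd_a.symm
    · rw [show (actSL Sm) (Multiplicative.ofAdd ![(1:ZMod 2), 1]) =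
        Multiplicative.ofAdd ![1, 1] by decide]
      simp only [f1_apply]
      show (qa:Qgrp N) ^ (1:ℕ) * qb ^ (1:ℕ) = qd * (qa ^ (1:ℕ) * qb ^ (1:ℕ)) * qd⁻¹
      simp only [pow_one]
      calc (qa : Qgrp N) * qb = qb * qa := comm_ab
        _ = (qd * qa * qd⁻¹) * (qd * qb * qd⁻¹) := by rw [hd_a, hd_b]
        _ = qd * (qa * qb) * qd⁻¹ := by simp [mul_assoc]
  intro v
  rw [V2_eta v]
  exact key _ _

lemma compat_Tm : ∀ v : Multiplicative V2,
    (f1 ((actSL Tm) v) : Qgrp N) = qe * f1 v * qe⁻¹ := by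
  have key : ∀ x y : ZMod 2, (f1 ((actSL Tm) (Multiplicative.ofAdd ![x, y])) : Qgrp N) =
      qe * f1 (Multiplicative.ofAdd ![x, y]) * qe⁻¹ := by
    intro x y
    rcases two_cases x with rfl | rfl <;> rcases two_cases y with rfl | rfl
    · rw [show (actSL Tm) (Multiplicative.ofAdd ![(0:ZMod 2), 0]) =
        Multiplicative.ofAdd ![0, 0] by decide]
      simp only [f1_apply]
      show (qa:Qgrp N) ^ (0:ℕ) * qb ^ (0:ℕ) = qe * (qa ^ (0:ℕ) * qb ^ (0:ℕ)) * qe⁻¹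
      simp
    · rw [show (actSL Tm) (Multiplicative.ofAdd ![(0:ZMod 2), 1]) =
        Multiplicative.ofAdd ![0, 1] by decide]
      simp only [f1_apply]
      show (qa:Qgrp N) ^ (0:ℕ) * qb ^ (1:ℕ) = qe * (qa ^ (0:ℕ) * qb ^ (1:ℕ)) * qe⁻¹
      simpa using he_b.symm
    · rw [show (actSL Tm) (Multiplicative.ofAdd ![(1:ZMod 2), 0]) =
        Multiplicative.ofAdd ![1, 1] by decide]
      simp only [f1_apply]
      show (qa:Qgrp N) ^ (1:ℕ) * qb ^ (1:ℕ) = qe * (qa ^ (1:ℕ) * qb ^ (0:ℕ)) * qe⁻¹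
      simpa using he_a.symm
    · rw [show (actSL Tm) (Multiplicative.ofAdd ![(1:ZMod 2), 1]) =
        Multiplicative.ofAdd ![1, 0] by decide]
      simp only [f1_apply]
      show (qa:Qgrp N) ^ (1:ℕ) * qb ^ (0:ℕ) = qe * (qa ^ (1:ℕ) * qb ^ (1:ℕ)) * qe⁻¹
      simp only [pow_one, pow_zero, mul_one]
      calc (qa : Qgrp N) = qa * (qb * qb) := by rw [← pow_two, hb2, mul_one]
        _ = (qa * qb) * qb := by rw [mul_assoc]
        _ = (qe * qa * qe⁻¹) * (qe * qb * qe⁻¹) := by rw [he_a, he_b]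
        _ = qe * (qa * qb) * qe⁻¹ := by simp [mul_assoc]
  intro v
  rw [V2_eta v]
  exact key _ _

/-- the compatibility subgroup -/
def compatSub (f : SL2Z4 →* Qgrp N) : Subgroup SL2Z4 where
  carrier := {g | ∀ v, (f1 ((actSL g) v) : Qgrp N) = f g * f1 v * (f g)⁻¹}
  one_mem' := by
    intro v
    simp
  mul_mem' := by
    intro g h hg hh v
    rw [map_mul, MulAut.mul_apply, hg, hh, map_mul]
    simp [mul_assoc]
  inv_mem' := by
    intro g hg v
    have := hg ((actSL g⁻¹) v)
    rw [show (actSL g) ((actSL g⁻¹) v) = v by rw [← MulAut.mul_apply, ← map_mul]; simp] at this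
    rw [map_inv, this]
    simp [mul_assoc]

lemma compat_all (f : SL2Z4 →* Qgrp N) (hS : ∀ v, (f1 ((actSL Sm) v) : Qgrp N) = f Sm * f1 v * (f Sm)⁻¹)
    (hT : ∀ v, (f1 ((actSL Tm) v) : Qgrp N) = f Tm * f1 v * (f Tm)⁻¹) :
    ∀ g v, (f1 ((actSL g) v) : Qgrp N) = f g * f1 v * (f g)⁻¹ := by
  intro g
  have : g ∈ compatSub f := by
    have htop : compatSub f = ⊤ := by
      rw [eq_top_iff, ← closure_SmTm, Subgroup.closure_le]
      rintro x (rfl | rfl)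
      · exact hS
      · exact hT
    rw [htop]; trivial
  exact this

lemma hcompat : ∀ g : SL2Z4, (f1 : Multiplicative V2 →* Qgrp N).comp (actSL g).toMonoidHom =
    (MulAut.conj (f2 g)).toMonoidHom.comp f1 := by
  intro g
  ext v
  have h := compat_all (N := N) f2 (fun v => by rw [f2_Sm]; exact compat_Sm v)
    (fun v => by rw [f2_Tm]; exact compat_Tm v) g (Multiplicative.ofAdd v)
  simpa using h

/-- the inverse hom for the even case -/
noncomputable def back : Tgt →* Qgrp N := SemidirectProduct.lift f1 f2 hcompat

end MCPaux2

namespace MCPaux2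
open MCPaux SemidirectProduct

variable {N : ℕ}

/-- generator images for the forward hom (even case) -/
def iotaE : Fin 5 → Tgt
  | 0 => inl ee1
  | 1 => inl ee2
  | 2 => inr Um
  | 3 => inr Sm
  | 4 => inr Tm

lemma Um_sq : Um * Um = 1 := by decide

/-- all relators except `U^N` hold independently of parity. -/
lemma iotaE_rels_core :
    ∀ r ∈ mcpRels N ∪ extraRels, r = (FreeGroup.of 2) ^ N ∨ FreeGroup.lift iotaE r = 1 := by
  have dec : ∀ r : FreeGroup (Fin 5), FreeGroup.lift iotaE r = 1 →
      (r = (FreeGroup.of 2) ^ N ∨ FreeGroup.lift iotaE r = 1) := fun _ h => Or.inr h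
  intro r hr
  rcases hr with hr | hr
  · rcases hr with rfl | rfl | rfl | rfl | rfl | rfl | rfl | rfl | rfl | rfl | rfl | rfl | rfl |
      rfl | rfl
    · exact dec _ (by simp only [map_mul, map_pow, map_inv, FreeGroup.lift_apply_of]; decide)
    · exact dec _ (by simp only [map_mul, map_pow, map_inv, FreeGroup.lift_apply_of]; decide)
    · exact dec _ (by simp only [map_mul, map_pow, map_inv, FreeGroup.lift_apply_of]; decide)
    · refine dec _ ?_
      rw [map_pow, pow_mul]
      rw [show (FreeGroup.lift iotaE (FreeGroup.of 0)) ^ 2 = 1 by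
        simp only [FreeGroup.lift_apply_of]; decide, one_pow]
    · refine dec _ ?_
      rw [map_pow, pow_mul]
      rw [show (FreeGroup.lift iotaE (FreeGroup.of 1)) ^ 2 = 1 by
        simp only [FreeGroup.lift_apply_of]; decide, one_pow]
    · exact Or.inl rfl
    · exact dec _ (by simp only [map_mul, map_pow, map_inv, FreeGroup.lift_apply_of]; decide)
    · exact dec _ (by simp only [map_mul, map_pow, map_inv, FreeGroup.lift_apply_of]; decide)
    · exact dec _ (by simp only [map_mul, map_pow, map_inv, FreeGroup.lift_apply_of]; decide)
    · exact dec _ (by simp only [map_mul, map_pow, map_inv, FreeGroup.lift_apply_of]; decide)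
    · exact dec _ (by simp only [map_mul, map_pow, map_inv, FreeGroup.lift_apply_of]; decide)
    · exact dec _ (by simp only [map_mul, map_pow, map_inv, FreeGroup.lift_apply_of]; decide)
    · exact dec _ (by simp only [map_mul, map_pow, map_inv, FreeGroup.lift_apply_of]; decide)
    · exact dec _ (by simp only [map_mul, map_pow, map_inv, FreeGroup.lift_apply_of]; decide)
    · exact dec _ (by simp only [map_mul, map_pow, map_inv, FreeGroup.lift_apply_of]; decide)
  · rcases hr with rfl | rfl | rfl
    · exact dec _ (by simp only [map_mul, map_pow, map_inv, FreeGroup.lift_apply_of]; decide)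
    · exact dec _ (by simp only [map_mul, map_pow, map_inv, FreeGroup.lift_apply_of]; decide)
    · exact dec _ (by simp only [map_mul, map_pow, map_inv, FreeGroup.lift_apply_of]; decide)

/-- forward hom, even case -/
def fwd (hN : Even N) : Qgrp N →* Tgt :=
  PresentedGroup.toGroup (f := iotaE) (by
    intro r hr
    rcases iotaE_rels_core r hr with rfl | h
    · obtain ⟨m, rfl⟩ := hN
      rw [map_pow, FreeGroup.lift_apply_of]
      show (inr Um : Tgt) ^ (m + m) = 1
      rw [show m + m = 2 * m by ring, pow_mul]
      rw [show ((inr Um : Tgt)) ^ 2 = 1 by decide, one_pow]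
    · exact h)

@[simp] lemma fwd_qa (hN : Even N) : fwd hN (qa : Qgrp N) = inl ee1 := PresentedGroup.toGroup.of _
@[simp] lemma fwd_qb (hN : Even N) : fwd hN (qb : Qgrp N) = inl ee2 := PresentedGroup.toGroup.of _
@[simp] lemma fwd_qc (hN : Even N) : fwd hN (qc : Qgrp N) = inr Um := PresentedGroup.toGroup.of _
@[simp] lemma fwd_qd (hN : Even N) : fwd hN (qd : Qgrp N) = inr Sm := PresentedGroup.toGroup.of _
@[simp] lemma fwd_qe (hN : Even N) : fwd hN (qe : Qgrp N) = inr Tm := PresentedGroup.toGroup.of _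

lemma h1_even (hN : Even N) : (back.comp (fwd hN) : Qgrp N →* Qgrp N) = MonoidHom.id _ := by
  apply PresentedGroup.ext
  intro i
  fin_cases i
  · show back (fwd hN (qa : Qgrp N)) = qa
    rw [fwd_qa, show (back (inl ee1) : Qgrp N) = f1 ee1 from SemidirectProduct.lift_inl _ _ _ _]
    show (qa : Qgrp N) ^ (1:ℕ) * qb ^ (0:ℕ) = qa
    simp
  · show back (fwd hN (qb : Qgrp N)) = qb
    rw [fwd_qb, show (back (inl ee2) : Qgrp N) = f1 ee2 from SemidirectProduct.lift_inl _ _ _ _]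
    show (qa : Qgrp N) ^ (0:ℕ) * qb ^ (1:ℕ) = qb
    simp
  · show back (fwd hN (qc : Qgrp N)) = qc
    rw [fwd_qc, show (back (inr Um) : Qgrp N) = f2 Um from SemidirectProduct.lift_inr _ _ _ _,
      f2_Um]
  · show back (fwd hN (qd : Qgrp N)) = qd
    rw [fwd_qd, show (back (inr Sm) : Qgrp N) = f2 Sm from SemidirectProduct.lift_inr _ _ _ _,
      f2_Sm]
  · show back (fwd hN (qe : Qgrp N)) = qe
    rw [fwd_qe, show (back (inr Tm) : Qgrp N) = f2 Tm from SemidirectProduct.lift_inr _ _ _ _,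
      f2_Tm]

lemma h2_even (hN : Even N) : ((fwd hN).comp (back : Tgt →* Qgrp N)) = MonoidHom.id _ := by
  apply SemidirectProduct.hom_ext
  · refine MonoidHom.ext fun v => ?_
    show fwd hN (back (inl v)) = inl v
    rw [show (back (inl v) : Qgrp N) = f1 v from SemidirectProduct.lift_inl _ _ _ _]
    rw [V2_eta v]
    rcases two_cases (Multiplicative.toAdd v 0) with h0 | h0 <;>
      rcases two_cases (Multiplicative.toAdd v 1) with h1 | h1 <;>
      rw [h0, h1] <;>
      rw [f1_apply] <;>
    · rw [map_mul, map_pow, map_pow, fwd_qa hN, fwd_qb hN, ← map_pow, ← map_pow, ← map_mul]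
      congr 1
      decide
  · apply MonoidHom.eq_of_eqOn_dense closure_SmTm
    rintro x (rfl | rfl)
    · show fwd hN (back (inr Sm)) = inr Sm
      rw [show (back (inr Sm) : Qgrp N) = f2 Sm from SemidirectProduct.lift_inr _ _ _ _, f2_Sm,
        fwd_qd]
    · show fwd hN (back (inr Tm)) = inr Tm
      rw [show (back (inr Tm) : Qgrp N) = f2 Tm from SemidirectProduct.lift_inr _ _ _ _, f2_Tm,
        fwd_qe]

/-- even case isomorphism `Q ≃* Tgt` -/
noncomputable def isoEven (hN : Even N) : Qgrp N ≃* Tgt :=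
  MonoidHom.toMulEquiv (fwd hN) back (h1_even hN) (h2_even hN)

end MCPaux2

namespace MCPaux2
open MCPaux SemidirectProduct

variable {N : ℕ}

-- ===== odd case =====

lemma actSL_Um : actSL Um = 1 := by
  apply MulEquiv.ext
  intro v
  rw [show (1 : MulAut (Multiplicative V2)) v = v from rfl]
  revert v
  decide

lemma hker : Subgroup.center SL2Z4 ≤ actSL.ker := by
  intro g hg
  rcases center_sub g (fun h => Subgroup.mem_center_iff.1 hg h) with rfl | rfl
  · exact map_one _
  · exact actSL_Um

noncomputable def psi : PSL2Z4 →* MulAut (Multiplicative V2) :=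
  QuotientGroup.lift _ actSL hker

lemma psi_mk (g : SL2Z4) : psi (QuotientGroup.mk g) = actSL g := rfl

abbrev TgtO := Multiplicative V2 ⋊[psi] PSL2Z4

/-- projection `Tgt → TgtO` -/
noncomputable def Pi : Tgt →* TgtO :=
  SemidirectProduct.map (MonoidHom.id _) (QuotientGroup.mk' _) (by
    intro g
    ext v
    rfl)

@[simp] lemma Pi_inl (v : Multiplicative V2) : Pi (inl v) = inl v := by
  simp [Pi]

@[simp] lemma Pi_inr (g : SL2Z4) : Pi (inr g) = inr ((g : SL2Z4) : PSL2Z4) := by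
  simp [Pi]

/-- forward hom, odd case -/
noncomputable def fwdO (hN : Odd N) : Qgrp N →* TgtO :=
  PresentedGroup.toGroup (f := fun i => Pi (iotaE i)) (by
    have hlift : FreeGroup.lift (fun i => Pi (iotaE i)) =
        Pi.comp (FreeGroup.lift iotaE) := by
      apply FreeGroup.ext_hom
      intro i
      simp [FreeGroup.lift_apply_of]
    intro r hr
    rcases iotaE_rels_core r hr with rfl | h
    · rw [map_pow, hlift]
      show (Pi ((FreeGroup.lift iotaE) (FreeGroup.of 2))) ^ N = 1
      rw [FreeGroup.lift_apply_of]
      show (Pi (inr Um)) ^ N = 1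
      rw [Pi_inr, Um_mk_eq_one, map_one, one_pow]
    · rw [hlift]
      show Pi ((FreeGroup.lift iotaE) r) = 1
      rw [h, map_one])

@[simp] lemma fwdO_qa (hN : Odd N) : fwdO hN (qa : Qgrp N) = inl ee1 := by
  have : fwdO hN (qa : Qgrp N) = Pi (iotaE 0) := PresentedGroup.toGroup.of _
  rw [this]; show Pi (inl ee1) = inl ee1; exact Pi_inl _
@[simp] lemma fwdO_qb (hN : Odd N) : fwdO hN (qb : Qgrp N) = inl ee2 := by
  have : fwdO hN (qb : Qgrp N) = Pi (iotaE 1) := PresentedGroup.toGroup.of _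
  rw [this]; show Pi (inl ee2) = inl ee2; exact Pi_inl _
@[simp] lemma fwdO_qc (hN : Odd N) : fwdO hN (qc : Qgrp N) = 1 := by
  have : fwdO hN (qc : Qgrp N) = Pi (iotaE 2) := PresentedGroup.toGroup.of _
  rw [this]; show Pi (inr Um) = 1
  rw [Pi_inr, Um_mk_eq_one, map_one]
@[simp] lemma fwdO_qd (hN : Odd N) : fwdO hN (qd : Qgrp N) = inr ((Sm : SL2Z4) : PSL2Z4) := by
  have : fwdO hN (qd : Qgrp N) = Pi (iotaE 3) := PresentedGroup.toGroup.of _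
  rw [this]; show Pi (inr Sm) = _; exact Pi_inr _
@[simp] lemma fwdO_qe (hN : Odd N) : fwdO hN (qe : Qgrp N) = inr ((Tm : SL2Z4) : PSL2Z4) := by
  have : fwdO hN (qe : Qgrp N) = Pi (iotaE 4) := PresentedGroup.toGroup.of _
  rw [this]; show Pi (inr Tm) = _; exact Pi_inr _

/-- The hom `P24 → Q` (odd case). -/
def toQ24 (hN : Odd N) : P24 →* Qgrp N :=
  PresentedGroup.toGroup (f := fun i => ![qd, qe] i) (by
    intro r hr
    rcases hr with (rfl | rfl | rfl) | rfl <;>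
      simp only [map_mul, map_pow, map_inv, FreeGroup.lift_apply_of, Matrix.cons_val_zero,
        Matrix.cons_val_one, Matrix.head_cons]
    · exact hd4
    · rw [hde3, hd2]; simp
    · exact he4
    · rw [hd2, hc1 hN, inv_one])

@[simp] lemma toQ24_of0 (hN : Odd N) : (toQ24 hN (PresentedGroup.of 0) : Qgrp N) = qd :=
  PresentedGroup.toGroup.of _
@[simp] lemma toQ24_of1 (hN : Odd N) : (toQ24 hN (PresentedGroup.of 1) : Qgrp N) = qe :=
  PresentedGroup.toGroup.of _

lemma e24_symm_Sm'  : e24.symm ((Sm : SL2Z4) : PSL2Z4) = PresentedGroup.of 0 := by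
  rw [MulEquiv.symm_apply_eq, e24_of0]
lemma e24_symm_Tm'  : e24.symm ((Tm : SL2Z4) : PSL2Z4) = PresentedGroup.of 1 := by
  rw [MulEquiv.symm_apply_eq, e24_of1]

/-- f₂ for the odd case. -/
noncomputable def f2o (hN : Odd N) : PSL2Z4 →* Qgrp N := (toQ24 hN).comp e24.symm.toMonoidHom

@[simp] lemma f2o_Sm (hN : Odd N) : (f2o hN ((Sm : SL2Z4) : PSL2Z4) : Qgrp N) = qd := by
  show toQ24 hN (e24.symm _) = qd
  rw [e24_symm_Sm, toQ24_of0]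
@[simp] lemma f2o_Tm (hN : Odd N) : (f2o hN ((Tm : SL2Z4) : PSL2Z4) : Qgrp N) = qe := by
  show toQ24 hN (e24.symm _) = qe
  rw [e24_symm_Tm, toQ24_of1]

lemma hcompatO (hN : Odd N) : ∀ gq : PSL2Z4,
    (f1 : Multiplicative V2 →* Qgrp N).comp (psi gq).toMonoidHom =
    (MulAut.conj (f2o hN gq)).toMonoidHom.comp f1 := by
  intro gq
  obtain ⟨g, rfl⟩ := QuotientGroup.mk'_surjective (Subgroup.center SL2Z4) gq
  ext v
  have h := compat_all (N := N) ((f2o hN).comp (QuotientGroup.mk' (Subgroup.center SL2Z4)))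
    (fun v => by
      show f1 _ = f2o hN ((Sm : SL2Z4) : PSL2Z4) * f1 v * (f2o hN ((Sm : SL2Z4) : PSL2Z4))⁻¹
      rw [f2o_Sm]; exact compat_Sm v)
    (fun v => by
      show f1 _ = f2o hN ((Tm : SL2Z4) : PSL2Z4) * f1 v * (f2o hN ((Tm : SL2Z4) : PSL2Z4))⁻¹
      rw [f2o_Tm]; exact compat_Tm v) g (Multiplicative.ofAdd v)
  simpa [psi_mk] using h

/-- the inverse hom for the odd case -/
noncomputable def backO (hN : Odd N) : TgtO →* Qgrp N :=
  SemidirectProduct.lift f1 (f2o hN) (hcompatO hN)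

lemma h1_odd (hN : Odd N) : ((backO hN).comp (fwdO hN) : Qgrp N →* Qgrp N) = MonoidHom.id _ := by
  apply PresentedGroup.ext
  intro i
  fin_cases i
  · show backO hN (fwdO hN (qa : Qgrp N)) = qa
    rw [fwdO_qa, show (backO hN (inl ee1) : Qgrp N) = f1 ee1 from SemidirectProduct.lift_inl _ _ _ _]
    show (qa : Qgrp N) ^ (1:ℕ) * qb ^ (0:ℕ) = qa
    simp
  · show backO hN (fwdO hN (qb : Qgrp N)) = qb
    rw [fwdO_qb, show (backO hN (inl ee2) : Qgrp N) = f1 ee2 from SemidirectProduct.lift_inl _ _ _ _]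
    show (qa : Qgrp N) ^ (0:ℕ) * qb ^ (1:ℕ) = qb
    simp
  · show backO hN (fwdO hN (qc : Qgrp N)) = qc
    rw [fwdO_qc, map_one, hc1 hN]
  · show backO hN (fwdO hN (qd : Qgrp N)) = qd
    rw [fwdO_qd, show (backO hN (inr ((Sm : SL2Z4) : PSL2Z4)) : Qgrp N) =
      f2o hN ((Sm : SL2Z4) : PSL2Z4) from SemidirectProduct.lift_inr _ _ _ _, f2o_Sm]
  · show backO hN (fwdO hN (qe : Qgrp N)) = qe
    rw [fwdO_qe, show (backO hN (inr ((Tm : SL2Z4) : PSL2Z4)) : Qgrp N) =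
      f2o hN ((Tm : SL2Z4) : PSL2Z4) from SemidirectProduct.lift_inr _ _ _ _, f2o_Tm]

lemma closure_PSL' : Subgroup.closure
    ({((Sm : SL2Z4) : PSL2Z4), ((Tm : SL2Z4) : PSL2Z4)} : Set PSL2Z4) = ⊤ := by
  have h := congrArg (Subgroup.map (QuotientGroup.mk' (Subgroup.center SL2Z4))) closure_SmTm
  rw [MonoidHom.map_closure] at h
  rw [show ((QuotientGroup.mk' (Subgroup.center SL2Z4)) '' {Sm, Tm}) =
    {((Sm : SL2Z4) : PSL2Z4), ((Tm : SL2Z4) : PSL2Z4)} by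
      rw [Set.image_insert_eq, Set.image_singleton]; rfl] at h
  rw [h]
  exact Subgroup.map_top_of_surjective _ (QuotientGroup.mk'_surjective _)

lemma h2_odd (hN : Odd N) : ((fwdO hN).comp (backO hN : TgtO →* Qgrp N)) = MonoidHom.id _ := by
  apply SemidirectProduct.hom_ext
  · refine MonoidHom.ext fun v => ?_
    show fwdO hN (backO hN (inl v)) = inl v
    rw [show (backO hN (inl v) : Qgrp N) = f1 v from SemidirectProduct.lift_inl _ _ _ _]
    rw [V2_eta v]
    rcases two_cases (Multiplicative.toAdd v 0) with h0 | h0 <;>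
      rcases two_cases (Multiplicative.toAdd v 1) with h1 | h1 <;>
      rw [h0, h1] <;>
      rw [f1_apply] <;>
    · rw [map_mul, map_pow, map_pow, fwdO_qa hN, fwdO_qb hN, ← map_pow, ← map_pow, ← map_mul]
      congr 1
      decide
  · apply MonoidHom.eq_of_eqOn_dense closure_PSL'
    rintro x (rfl | rfl)
    · show fwdO hN (backO hN (inr _)) = inr _
      rw [show (backO hN (inr ((Sm : SL2Z4) : PSL2Z4)) : Qgrp N) =
        f2o hN ((Sm : SL2Z4) : PSL2Z4) from SemidirectProduct.lift_inr _ _ _ _, f2o_Sm, fwdO_qd]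
    · show fwdO hN (backO hN (inr _)) = inr _
      rw [show (backO hN (inr ((Tm : SL2Z4) : PSL2Z4)) : Qgrp N) =
        f2o hN ((Tm : SL2Z4) : PSL2Z4) from SemidirectProduct.lift_inr _ _ _ _, f2o_Tm, fwdO_qe]

/-- odd case isomorphism -/
noncomputable def isoOdd (hN : Odd N) : Qgrp N ≃* TgtO :=
  MonoidHom.toMulEquiv (fwdO hN) (backO hN) (h1_odd hN) (h2_odd hN)

end MCPaux2

namespace MCPaux2
open MCPaux

lemma Ksub_eq (N : ℕ) : Ksub N =
    Subgroup.normalClosure ((PresentedGroup.mk (mcpRels N)) '' extraRels) := by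
  unfold Ksub
  congr 1
  rw [show extraRels = insert ((FreeGroup.of 0 : FreeGroup (Fin 5)) ^ 2)
      (insert ((FreeGroup.of 1 : FreeGroup (Fin 5)) ^ 2)
        ({(FreeGroup.of 2 : FreeGroup (Fin 5)) ^ 2 * ((FreeGroup.of 1) ^ 2)⁻¹ *
          ((FreeGroup.of 0) ^ 2)⁻¹} : Set (FreeGroup (Fin 5)))) from rfl,
    Set.image_insert_eq, Set.image_insert_eq, Set.image_singleton]
  simp only [map_mul, map_inv, map_pow]
  rfl

noncomputable def iso0 (N : ℕ) : (MCP N ⧸ Ksub N) ≃* Qgrp N := by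
  haveI : (Subgroup.normalClosure
      ((PresentedGroup.mk (mcpRels N)) '' extraRels)).Normal := Subgroup.normalClosure_normal
  exact (QuotientGroup.quotientMulEquivOfEq (Ksub_eq N)).trans
    (presentedQuotEquiv (mcpRels N) extraRels)

end MCPaux2


/-- For `K` the normal subgroup of `G̃_N` generated by `u₁²`, `u₂²`, `U²u₂⁻²u₁⁻²`:
if `N` is even then `G̃_N/K ≅ (ℤ/2)² ⋊ SL₂(ℤ/4)`, and if `N` is odd then
`G̃_N/K ≅ (ℤ/2)² ⋊ PSL₂(ℤ/4)`, the action being mod-2 reduction followed by matrix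
multiplication on column vectors. -/
theorem quotient_by_K (N : ℕ) (hN : 2 ≤ N) :
    (Even N → Nonempty ((MCP N ⧸ Ksub N) ≃* (Multiplicative V2 ⋊[actSL] SL2Z4))) ∧
    (Odd N → ∃ ψ : PSL2Z4 →* MulAut (Multiplicative V2),
      (∀ g : SL2Z4, ψ (QuotientGroup.mk g) = actSL g) ∧
      Nonempty ((MCP N ⧸ Ksub N) ≃* (Multiplicative V2 ⋊[ψ] PSL2Z4))) := by
  constructor
  · intro hEven
    exact ⟨(MCPaux2.iso0 N).trans (MCPaux2.isoEven hEven)⟩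
  · intro hOdd
    exact ⟨MCPaux2.psi, fun g => rfl,
      ⟨(MCPaux2.iso0 N).trans (MCPaux2.isoOdd hOdd)⟩⟩
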